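/- Let H : ℝ → ℝ be continuous and coercive and F0 : ℝ → ℝ be continuous, non-increasing and semi-coercive. Then the relaxation coincides with the Godunov action: for every p ∈ ℝ and every q ∈ ℝ with F0(q) = G(q,p), one has F0(q) = (ℜF0)(p). -/
import Mathlib


open Set Filter

attribute [local instance] Classical.propDecidable

noncomputable section

/-- `H` is coercive: `H p → +∞` as `|p| → +∞`. -/
def Coercive (H : ℝ → ℝ) : Prop := Tendsto H (cocompact ℝ) atTop

/-- `F` is semi-coercive: `F p → +∞` as `p → -∞`. -/
def SemiCoercive (F : ℝ → ℝ) : Prop := Tendsto F atBot atTop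

/-- Sub-relaxation: `(R̲F)(p) = sup_{q ≥ p} min (F q) (H q)`. -/
def subR (H F : ℝ → ℝ) (p : ℝ) : ℝ := sSup ((fun q => min (F q) (H q)) '' Ici p)

/-- Super-relaxation: `(R̄F)(p) = inf_{q ≤ p} max (F q) (H q)`. -/
def supR (H F : ℝ → ℝ) (p : ℝ) : ℝ := sInf ((fun q => max (F q) (H q)) '' Iic p)

/-- Relaxation operator: `R̲F` where `F ≥ H`, `R̄F` where `F ≤ H`. -/
def relax (H F : ℝ → ℝ) (p : ℝ) : ℝ := if H p ≤ F p then subR H F p else supR H F p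

/-- `p` is a negative characteristic point of `F` relative to `H`. -/
def negChar (H F : ℝ → ℝ) (p : ℝ) : Prop :=
  H p = F p ∧ ∃ ε > 0, ∀ q ∈ Ioo (p - ε) p, H q < H p

/-- `p` is a positive characteristic point of `F` relative to `H`. -/
def posChar (H F : ℝ → ℝ) (p : ℝ) : Prop :=
  H p = F p ∧ ∃ ε > 0, ∀ q ∈ Ioo p (p + ε), H p < H q

/-- The upper point `p⁺ ∈ ℝ ∪ {+∞}` associated with `p` and `H`. -/
def upperPt (H : ℝ → ℝ) (p : ℝ) : EReal :=
  if ∀ ε > 0, ∃ q, p < q ∧ q < p + ε ∧ H q ≤ H p then (p : EReal)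
  else sSup ((fun q : ℝ => (q : EReal)) '' {q : ℝ | p < q ∧ ∀ r ∈ Ioo p q, H p < H r})

/-- The lower point `p⁻` associated with `p` and `H`. -/
def lowerPt (H : ℝ → ℝ) (p : ℝ) : ℝ :=
  if ∀ ε > 0, ∃ q, p - ε < q ∧ q < p ∧ H p ≤ H q then p
  else sInf {q : ℝ | q < p ∧ ∀ r ∈ Ioo q p, H r < H p}

/-- `p` is a positive limiter point of `F`. -/
def posLimiter (H F : ℝ → ℝ) (p : ℝ) : Prop :=
  (p : EReal) < upperPt H p ∧ F p ≤ H p ∧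
    ∀ q : ℝ, H q < H p → F q ≤ H q →
      {r : ℝ | lowerPt H q < r ∧ (r : EReal) < upperPt H q} ∩
        {r : ℝ | p < r ∧ (r : EReal) < upperPt H p} = ∅

/-- `p` is a negative limiter point of `F`. -/
def negLimiter (H F : ℝ → ℝ) (p : ℝ) : Prop :=
  lowerPt H p < p ∧ H p ≤ F p ∧
    ∀ q : ℝ, H q ≤ F q → H p < H q →
      {r : ℝ | lowerPt H q < r ∧ (r : EReal) < upperPt H q} ∩ Ioo (lowerPt H p) p = ∅

/-- The Godunov flux associated with `H`. -/
def godunov (H : ℝ → ℝ) (q p : ℝ) : ℝ :=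
  if p ≤ q then sSup (H '' Icc p q) else sInf (H '' Icc q p)

/-- The lower (set-valued) Godunov semi-flux `G̲(q,p)`, as a subset of the extended reals. -/
def subG (H : ℝ → ℝ) (q p : ℝ) : Set EReal :=
  if q < p then {⊥}
  else if q = p then Iic ((H p : ℝ) : EReal)
  else {((godunov H q p : ℝ) : EReal)}

/-- The upper (set-valued) Godunov semi-flux `Ḡ(q,p)`, as a subset of the extended reals. -/
def supG (H : ℝ → ℝ) (q p : ℝ) : Set EReal :=
  if q < p then {((godunov H q p : ℝ) : EReal)}
  else if q = p then Ici ((H p : ℝ) : EReal)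
  else {⊤}

/-- The relaxation operator coincides with Godunov's operator. -/
theorem relax_eq_godunov_action (H F0 : ℝ → ℝ)
    (hH : Continuous H) (hHc : Coercive H)
    (hF : Continuous F0) (hFa : Antitone F0) (hFs : SemiCoercive F0)
    (p q : ℝ) (h : F0 q = godunov H q p) :
    F0 q = relax H F0 p := by
  by_cases hpq : p ≤ q
  · -- godunov is the max of H on [p,q], attained at some x
    have hne : (Icc p q).Nonempty := nonempty_Icc.mpr hpq
    obtain ⟨x, hx, hmax⟩ := isCompact_Icc.exists_isMaxOn hne hH.continuousOn
    have hsup : sSup (H '' Icc p q) = H x := by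
      apply le_antisymm
      · apply csSup_le (hne.image H)
        rintro _ ⟨y, hy, rfl⟩; exact hmax hy
      · exact le_csSup (isCompact_Icc.image hH).bddAbove ⟨x, hx, rfl⟩
    have hFq : F0 q = H x := by rw [h, godunov, if_pos hpq, hsup]
    have hHp : H p ≤ F0 p :=
      le_trans (hmax ⟨le_refl p, hpq⟩) (hFq ▸ hFa hpq)
    rw [relax, if_pos hHp, subR, hFq]
    refine le_antisymm ?_ ?_
    · have hxmin : min (F0 x) (H x) = H x :=
        min_eq_right (hFq ▸ hFa hx.2)
      have hbdd : BddAbove ((fun r => min (F0 r) (H r)) '' Ici p) := by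
        refine ⟨F0 p, ?_⟩
        rintro _ ⟨y, hy, rfl⟩
        exact le_trans (min_le_left _ _) (hFa hy)
      exact le_csSup hbdd ⟨x, hx.1, hxmin⟩
    · apply csSup_le (by exact ⟨_, ⟨p, le_refl p, rfl⟩⟩)
      rintro _ ⟨y, hy, rfl⟩
      by_cases hyq : y ≤ q
      · exact le_trans (min_le_right _ _) (hmax ⟨hy, hyq⟩)
      · exact le_trans (min_le_left _ _) (hFq ▸ hFa (le_of_not_ge hyq))
  · -- q < p : godunov is the min of H on [q,p], attained at some x
    have hqp : q ≤ p := le_of_lt (lt_of_not_ge hpq)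
    have hne : (Icc q p).Nonempty := nonempty_Icc.mpr hqp
    obtain ⟨x, hx, hmin⟩ := isCompact_Icc.exists_isMinOn hne hH.continuousOn
    have hinf : sInf (H '' Icc q p) = H x := by
      apply le_antisymm
      · exact csInf_le (isCompact_Icc.image hH).bddBelow ⟨x, hx, rfl⟩
      · apply le_csInf (hne.image H)
        rintro _ ⟨y, hy, rfl⟩; exact hmin hy
    have hFq : F0 q = H x := by rw [h, godunov, if_neg hpq, hinf]
    by_cases hHp : H p ≤ F0 p
    · -- then H p = F0 p = F0 q
      have h1 : F0 p ≤ F0 q := hFa hqp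
      have h2 : F0 q ≤ H p := hFq ▸ hmin ⟨hqp, le_refl p⟩
      have hEq : F0 p = H p := le_antisymm (le_trans h1 h2) hHp
      have hEq2 : F0 q = F0 p := le_antisymm (le_trans h2 hEq.ge) h1
      rw [relax, if_pos hHp, subR, hEq2]
      refine le_antisymm ?_ ?_
      · have : min (F0 p) (H p) = F0 p := min_eq_left (le_of_eq hEq)
        have hbdd : BddAbove ((fun r => min (F0 r) (H r)) '' Ici p) := by
          refine ⟨F0 p, ?_⟩
          rintro _ ⟨y, hy, rfl⟩
          exact le_trans (min_le_left _ _) (hFa hy)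
        exact le_csSup hbdd ⟨p, le_refl p, this⟩
      · apply csSup_le (by exact ⟨_, ⟨p, le_refl p, rfl⟩⟩)
        rintro _ ⟨y, hy, rfl⟩
        exact le_trans (min_le_left _ _) (hFa hy)
    · rw [relax, if_neg hHp, supR, hFq]
      have hlb : ∀ z ∈ (fun r => max (F0 r) (H r)) '' Iic p, H x ≤ z := by
        rintro _ ⟨y, hy, rfl⟩
        by_cases hyq : q ≤ y
        · exact le_trans (hmin ⟨hyq, hy⟩) (le_max_right _ _)
        · exact le_trans (hFq ▸ hFa (le_of_not_ge hyq)) (le_max_left _ _)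
      refine le_antisymm ?_ ?_
      · apply le_csInf (by exact ⟨_, ⟨p, le_refl p, rfl⟩⟩) hlb
      · have hxmax : max (F0 x) (H x) = H x :=
          max_eq_right (hFq ▸ hFa hx.1)
        exact csInf_le ⟨H x, hlb⟩ ⟨x, hx.2, hxmax⟩
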